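/- For every X ∈ ℝ^{(k−r)×r}, the k×k matrix [exp(Z_⊥XZ⁺)·Z | Z_⊥] obtained by concatenating the columns of exp(Z_⊥XZ⁺)·Z and of Z_⊥ (viewed as a square k×k matrix via the equivalence Fin r ⊕ Fin (k−r) ≃ Fin k) is invertible. -/

import Mathlib

open Matrix

lemma mulVec_zero_of_rank {m n : ℕ} (A : Matrix (Fin m) (Fin n) ℝ) (h : A.rank = n) :
    ∀ v, A *ᵥ v = 0 → v = 0 := by
  rw [← Matrix.ker_mulVecLin_eq_bot_iff]
  have h1 := LinearMap.finrank_range_add_finrank_ker A.mulVecLin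
  rw [Module.finrank_pi] at h1
  have h2 : A.rank = Module.finrank ℝ (LinearMap.range A.mulVecLin) := rfl
  have h3 : Module.finrank ℝ (LinearMap.ker A.mulVecLin) = 0 := by
    simp only [Fintype.card_fin] at h1; omega
  exact Submodule.finrank_eq_zero.mp h3

lemma exp_sq_zero {n : ℕ} (M : Matrix (Fin n) (Fin n) ℝ) (h : M * M = 0) :
    NormedSpace.exp M = 1 + M := by
  simp only [NormedSpace.exp_eq_tsum ℝ]
  rw [tsum_eq_sum (s := {0, 1}) ?h]
  · simp [Finset.sum_pair]
  · intro b hb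
    have hb2 : 2 ≤ b := by
      simp only [Finset.mem_insert, Finset.mem_singleton] at hb; omega
    have hMb : M ^ b = 0 := by
      have : M ^ b = M ^ 2 * M ^ (b - 2) := by
        rw [← pow_add]; congr 1; omega
      rw [this, pow_two, h, Matrix.zero_mul]
    simp [hMb]

theorem stmt9 (k r : ℕ) (hr : 0 < r) (hrk : r < k)
    (Z : Matrix (Fin k) (Fin r) ℝ) (hZ : Z.rank = r)
    (Zperp : Matrix (Fin k) (Fin (k - r)) ℝ) (hZperp : Zperp.rank = k - r)
    (horth : Zᵀ * Zperp = 0)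
    (X : Matrix (Fin (k - r)) (Fin r) ℝ) :
    IsUnit ((Matrix.fromCols
        (NormedSpace.exp (Zperp * X * ((Zᵀ * Z)⁻¹ * Zᵀ)) * Z) Zperp).submatrix id
      ((finSumFinEquiv.trans (finCongr (Nat.add_sub_cancel' hrk.le))).symm)) := by
  set M : Matrix (Fin k) (Fin k) ℝ := Zperp * X * ((Zᵀ * Z)⁻¹ * Zᵀ) with hM
  have hMperp : M * Zperp = 0 := by
    rw [hM]
    simp only [Matrix.mul_assoc, horth, Matrix.mul_zero]
  have hMsq : M * M = 0 := by
    nth_rewrite 2 [hM]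
    rw [← Matrix.mul_assoc M (Zperp * X) ((Zᵀ * Z)⁻¹ * Zᵀ),
      ← Matrix.mul_assoc M Zperp X, hMperp, Matrix.zero_mul, Matrix.zero_mul]
  have hexp : NormedSpace.exp M = 1 + M := exp_sq_zero M hMsq
  have hexpperp : NormedSpace.exp M * Zperp = Zperp := by
    rw [hexp, Matrix.add_mul, Matrix.one_mul, hMperp, add_zero]
  set e := (finSumFinEquiv.trans (finCongr (Nat.add_sub_cancel' hrk.le))).symm with he
  have hfactor : (Matrix.fromCols (NormedSpace.exp M * Z) Zperp).submatrix id e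
      = NormedSpace.exp M * (Matrix.fromCols Z Zperp).submatrix id e := by
    conv_lhs => rw [← hexpperp]
    rw [← Matrix.mul_fromCols]
    ext i j
    simp [Matrix.submatrix, Matrix.mul_apply]
  rw [hfactor]
  refine (Matrix.isUnit_exp M).mul ?_
  have hZTZ := mulVec_zero_of_rank (Zᵀ * Z)
    (by rw [Matrix.rank_transpose_mul_self, hZ])
  have hZperp0 := mulVec_zero_of_rank Zperp (by simpa using hZperp)
  rw [← Matrix.mulVec_injective_iff_isUnit]
  have hker : ∀ v, (Matrix.fromCols Z Zperp).submatrix id e *ᵥ v = 0 → v = 0 := by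
    intro v hv
    rw [Matrix.submatrix_mulVec_equiv] at hv
    have hv' : Matrix.fromCols Z Zperp *ᵥ (v ∘ e.symm) = 0 := by
      funext i; exact congrFun hv i
    have hsum : v ∘ e.symm = Sum.elim ((v ∘ e.symm) ∘ Sum.inl) ((v ∘ e.symm) ∘ Sum.inr) := by
      funext x; cases x <;> rfl
    rw [hsum, Matrix.fromCols_mulVec_sumElim] at hv'
    set v₁ := (v ∘ e.symm) ∘ Sum.inl with hv₁def
    set v₂ := (v ∘ e.symm) ∘ Sum.inr with hv₂def
    have h1 : Zᵀ *ᵥ (Z *ᵥ v₁) + Zᵀ *ᵥ (Zperp *ᵥ v₂) = 0 := by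
      rw [← Matrix.mulVec_add, hv', Matrix.mulVec_zero]
    rw [Matrix.mulVec_mulVec, Matrix.mulVec_mulVec, horth, Matrix.zero_mulVec, add_zero] at h1
    have hv₁ : v₁ = 0 := hZTZ v₁ h1
    have hv₂ : v₂ = 0 := by
      apply hZperp0
      rw [hv₁] at hv'
      simpa using hv'
    funext i
    have hi : v (e.symm (e i)) = 0 := by
      rcases hx : e i with x | x
      · have := congrFun hv₁ x
        simpa [hv₁def, hx] using this
      · have := congrFun hv₂ x
        simpa [hv₂def, hx] using this
    simpa using hi
  intro x y hxy
  have := hker (x - y) (by rw [Matrix.mulVec_sub, hxy, sub_self])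
  exact sub_eq_zero.mp this
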